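/- Every finite-dimensional irreducible representation of U'_q(sp_{2n}) (q nonzero, not a root of unity) is a highest weight representation: it contains a nonzero vector v with s_ij v = 0 for all odd i ∈ {1,3,…,2n−1} and 1 ≤ j ≤ i, and s_{i,i+1} v = λ_i v for some nonzero complex numbers λ_i, and v generates the representation. -/

import Mathlib

noncomputable section

/-- Generators `s_ij` (1 ≤ i,j ≤ 2n, 0-indexed here) and the inverses
`s_{2k-1,2k}⁻¹` (paper-odd rows, here `sInv k` for `k : Fin n`) of the twisted
quantized enveloping algebra `U'_q(sp_{2n})`. -/
inductive SpGen (n : ℕ) where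
  | s (i j : Fin (2 * n))
  | sInv (k : Fin n)

/-- The generator `s_ij` inside the free algebra. -/
def Sg (n : ℕ) (i j : Fin (2 * n)) : FreeAlgebra ℂ (SpGen n) := FreeAlgebra.ι ℂ (SpGen.s i j)

/-- The generator `s_{2k-1,2k}⁻¹` inside the free algebra. -/
def SIg (n : ℕ) (k : Fin n) : FreeAlgebra ℂ (SpGen n) := FreeAlgebra.ι ℂ (SpGen.sInv k)

/-- The 0-indexed version of the paper's odd index `2k−1`. -/
def lo {n : ℕ} (k : Fin n) : Fin (2 * n) := ⟨2 * k.val, by have := k.isLt; omega⟩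

/-- The 0-indexed version of the paper's even index `2k`. -/
def hi {n : ℕ} (k : Fin n) : Fin (2 * n) := ⟨2 * k.val + 1, by have := k.isLt; omega⟩

/-- `q^{δ_ab}`: equals `q` if `a = b` and `1` otherwise. -/
def qd (q : ℂ) {m : ℕ} (a b : Fin m) : ℂ := if a = b then q else 1

/-- `δ_{a<b}`: equals `1` if `a < b` and `0` otherwise. -/
def dlt {m : ℕ} (a b : Fin m) : ℂ := if a < b then 1 else 0

/-- `δ_{a<b<c}`: equals `1` if `a < b < c` and `0` otherwise. -/
def dlt3 {m : ℕ} (a b c : Fin m) : ℂ := if a < b ∧ b < c then 1 else 0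

/-- The defining relations of the twisted quantized enveloping algebra
`U'_q(sp_{2n})`: vanishing of `s_ij` above the block diagonal, invertibility
of the `s_{2k-1,2k}`, the component form of the reflection equation
`R S₁ R' S₂ = S₂ R' S₁ R`, and the relations
`s_{i+1,i+1} s_ii − q² s_{i+1,i} s_{i,i+1} = q³` for (paper-)odd `i`. -/
inductive SpRel (q : ℂ) (n : ℕ) :
    FreeAlgebra ℂ (SpGen n) → FreeAlgebra ℂ (SpGen n) → Prop where
  | s_zero (i j : Fin (2 * n))
      (h : (j.val = i.val + 1 ∧ i.val % 2 = 1) ∨ i.val + 2 ≤ j.val) :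
      SpRel q n (Sg n i j) 0
  | inv_right (k : Fin n) : SpRel q n (Sg n (lo k) (hi k) * SIg n k) 1
  | inv_left (k : Fin n) : SpRel q n (SIg n k * Sg n (lo k) (hi k)) 1
  | reflection (i j a b : Fin (2 * n)) :
      SpRel q n
        ((qd q a j * qd q i j) • (Sg n i a * Sg n j b)
          - (qd q a b * qd q i b) • (Sg n j b * Sg n i a))
        (((q - q⁻¹) * qd q a i * (dlt b a - dlt i j)) • (Sg n j a * Sg n i b)
          + (q - q⁻¹) • ((qd q a b * dlt b i) • (Sg n j i * Sg n b a)
              - (qd q i j * dlt a j) • (Sg n i j * Sg n a b))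
          + ((q - q⁻¹) ^ 2 * (dlt3 b a i - dlt3 a i j)) • (Sg n j i * Sg n a b))
  | qdet (k : Fin n) :
      SpRel q n
        (Sg n (hi k) (hi k) * Sg n (lo k) (lo k)
          - (q ^ 2) • (Sg n (hi k) (lo k) * Sg n (lo k) (hi k)))
        ((q ^ 3 : ℂ) • (1 : FreeAlgebra ℂ (SpGen n)))

/-- The twisted quantized enveloping algebra `U'_q(sp_{2n})`. -/
abbrev Usp (q : ℂ) (n : ℕ) := RingQuot (SpRel q n)

/-- The generator `s_ij` of `U'_q(sp_{2n})`. -/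
def S (q : ℂ) (n : ℕ) (i j : Fin (2 * n)) : Usp q n :=
  RingQuot.mkAlgHom ℂ (SpRel q n) (Sg n i j)

/-- The generator `s_{2k-1,2k}⁻¹` of `U'_q(sp_{2n})`. -/
def SInv (q : ℂ) (n : ℕ) (k : Fin n) : Usp q n :=
  RingQuot.mkAlgHom ℂ (SpRel q n) (SIg n k)



-- auxiliary lemmas
lemma S_zero (q : ℂ) (n : ℕ) (i j : Fin (2 * n))
    (h : (j.val = i.val + 1 ∧ i.val % 2 = 1) ∨ i.val + 2 ≤ j.val) : S q n i j = 0 := by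
  have h1 := RingQuot.mkAlgHom_rel ℂ (SpRel.s_zero (q := q) i j h)
  simpa [S] using h1

lemma refl_S (q : ℂ) (n : ℕ) (i j a b : Fin (2 * n)) :
    (qd q a j * qd q i j) • (S q n i a * S q n j b)
      - (qd q a b * qd q i b) • (S q n j b * S q n i a)
    = ((q - q⁻¹) * qd q a i * (dlt b a - dlt i j)) • (S q n j a * S q n i b)
      + (q - q⁻¹) • ((qd q a b * dlt b i) • (S q n j i * S q n b a)
          - (qd q i j * dlt a j) • (S q n i j * S q n a b))
      + ((q - q⁻¹) ^ 2 * (dlt3 b a i - dlt3 a i j)) • (S q n j i * S q n a b) := by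
  have h := RingQuot.mkAlgHom_rel ℂ (SpRel.reflection (q := q) (n := n) i j a b)
  simpa only [S, map_sub, map_add, map_smul, map_mul] using h

lemma S_inv_right (q : ℂ) (n : ℕ) (k : Fin n) :
    S q n (lo k) (hi k) * SInv q n k = 1 := by
  have h := RingQuot.mkAlgHom_rel ℂ (SpRel.inv_right (q := q) (n := n) k)
  simpa only [S, SInv, map_mul, map_one] using h

lemma S_inv_left (q : ℂ) (n : ℕ) (k : Fin n) :
    SInv q n k * S q n (lo k) (hi k) = 1 := by
  have h := RingQuot.mkAlgHom_rel ℂ (SpRel.inv_left (q := q) (n := n) k)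
  simpa only [S, SInv, map_mul, map_one] using h


lemma comm_lt {q : ℂ} {n : ℕ} (k m : Fin n) (hkm : k < m) (b : Fin (2 * n))
    (hb : b.val ≤ 2 * k.val + 1) :
    S q n (lo m) (hi m) * S q n (lo k) b = S q n (lo k) b * S q n (lo m) (hi m) := by
  have h := refl_S q n (lo m) (lo k) (hi m) b
  have hkm' : k.val < m.val := hkm
  have z1 : S q n (lo k) (hi m) = 0 := S_zero _ _ _ _ (Or.inr (by simp [lo, hi]; omega))
  have z2 : S q n (lo k) (lo m) = 0 := S_zero _ _ _ _ (Or.inr (by simp [lo, hi]; omega))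
  rw [z1, z2] at h
  simp only [qd, dlt, dlt3, Fin.ext_iff, Fin.lt_def, lo, hi] at h
  simp only [show ¬(2 * m.val + 1 = 2 * k.val) from by omega,
    show ¬(2 * m.val = 2 * k.val) from by omega,
    show ¬(2 * m.val + 1 = b.val) from by omega,
    show ¬(2 * m.val = b.val) from by omega,
    show ¬(2 * m.val + 1 = 2 * m.val) from by omega,
    show ¬(2 * m.val < 2 * k.val) from by omega,
    show ¬(2 * m.val + 1 < 2 * k.val) from by omega,
    show ¬(2 * m.val + 1 < 2 * m.val) from by omega,
    if_true, if_false, ite_true, ite_false, zero_mul, mul_zero, smul_zero, zero_smul,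
    add_zero, zero_add, one_mul, mul_one, one_smul, sub_zero, and_false, false_and] at h
  simp only [lo, hi]
  exact sub_eq_zero.mp h

lemma row_rel1 {q : ℂ} {n : ℕ} (hq : q ≠ 0) (k : Fin n) (j0 : Fin (2 * n))
    (hj : j0.val < 2 * k.val) :
    S q n (lo k) (hi k) * S q n (lo k) j0
      = q • (S q n (lo k) j0 * S q n (lo k) (hi k)) := by
  have h := refl_S q n (lo k) (lo k) (hi k) j0
  have z : S q n j0 (hi k) = 0 := S_zero _ _ _ _ (Or.inr (by simp [hi]; omega))
  rw [z] at h
  simp only [qd, dlt, dlt3,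
    show ¬(hi k = lo k) from by simp [Fin.ext_iff, hi, lo],
    show ¬(hi k = j0) from by simp [Fin.ext_iff, hi]; omega,
    show ¬(lo k = j0) from by simp [Fin.ext_iff, lo]; omega,
    show (j0 < hi k) from by simp [Fin.lt_def, hi]; omega,
    show ¬(lo k < lo k) from lt_irrefl _,
    show (j0 < lo k) from by simp [Fin.lt_def, lo]; omega,
    show ¬(hi k < lo k) from by simp [Fin.lt_def, hi, lo],
    eq_self_iff_true, if_true, if_false, ite_true, ite_false, and_false, false_and,
    sub_self, sub_zero, zero_mul, mul_zero, smul_zero, zero_smul, add_zero, zero_add,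
    one_mul, mul_one, one_smul] at h
  have h4 : S q n (lo k) j0 * S q n (lo k) (hi k)
      = q • (S q n (lo k) (hi k) * S q n (lo k) j0)
        - (q - q⁻¹) • (S q n (lo k) (hi k) * S q n (lo k) j0) :=
    eq_sub_of_add_eq' (sub_eq_iff_eq_add.mp h).symm
  rw [h4, smul_sub, smul_smul, smul_smul, ← sub_smul,
    show q * q - q * (q - q⁻¹) = 1 from by field_simp; ring, one_smul]

lemma row_rel2 {q : ℂ} {n : ℕ} (hq : q ≠ 0) (k : Fin n) :
    S q n (lo k) (hi k) * S q n (lo k) (lo k)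
      = (q ^ 2) • (S q n (lo k) (lo k) * S q n (lo k) (hi k)) := by
  have h := refl_S q n (lo k) (lo k) (hi k) (lo k)
  simp only [qd, dlt, dlt3,
    show ¬(hi k = lo k) from by simp [Fin.ext_iff, hi, lo],
    show (lo k < hi k) from by simp [Fin.lt_def, hi, lo],
    show ¬(lo k < lo k) from lt_irrefl _,
    show ¬(hi k < lo k) from by simp [Fin.lt_def, hi, lo],
    eq_self_iff_true, if_true, if_false, ite_true, ite_false, and_false, false_and,
    sub_self, sub_zero, zero_mul, mul_zero, smul_zero, zero_smul, add_zero, zero_add,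
    one_mul, mul_one, one_smul] at h
  have h4 : q • (S q n (lo k) (lo k) * S q n (lo k) (hi k))
      = q • (S q n (lo k) (hi k) * S q n (lo k) (lo k))
        - (q - q⁻¹) • (S q n (lo k) (hi k) * S q n (lo k) (lo k)) :=
    eq_sub_of_add_eq' (sub_eq_iff_eq_add.mp h).symm
  rw [pow_two, ← smul_smul, h4, smul_sub, smul_smul, smul_smul, ← sub_smul,
    show q * q - q * (q - q⁻¹) = 1 from by field_simp; ring, one_smul]


open Module LinearMap

lemma aux_conj_pow {V : Type} [AddCommGroup V] [Module ℂ V]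
    (B X : Module.End ℂ V) (c μ : ℂ) (h : B * X = c • (X * B)) (m : ℕ) :
    (B - (c * μ) • 1) ^ m * X = c ^ m • (X * (B - μ • 1) ^ m) := by
  induction m with
  | zero => simp
  | succ m ih =>
    have h1 : (B - (c * μ) • 1) * X = c • (X * (B - μ • 1)) := by
      rw [sub_mul, h, smul_mul_assoc, one_mul, mul_sub, mul_smul_comm, mul_one, smul_sub, smul_smul]
    calc (B - (c * μ) • 1) ^ (m + 1) * X
        = (B - (c * μ) • 1) ^ m * ((B - (c * μ) • 1) * X) := by
          rw [pow_succ, mul_assoc]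
      _ = c • ((B - (c * μ) • 1) ^ m * (X * (B - μ • 1))) := by rw [h1, mul_smul_comm]
      _ = c • (((B - (c * μ) • 1) ^ m * X) * (B - μ • 1)) := by rw [mul_assoc]
      _ = c ^ m • c • ((X * (B - μ • 1) ^ m) * (B - μ • 1)) := by
          rw [ih, smul_mul_assoc, smul_comm]
      _ = c ^ (m + 1) • (X * (B - μ • 1) ^ (m + 1)) := by
          rw [mul_assoc, ← pow_succ, smul_smul, ← pow_succ]

lemma aux_mapsTo_maxGen {V : Type} [AddCommGroup V] [Module ℂ V]
    (B X : Module.End ℂ V) (c μ : ℂ) (h : B * X = c • (X * B)) {v : V}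
    (hv : v ∈ B.maxGenEigenspace μ) : X v ∈ B.maxGenEigenspace (c * μ) := by
  rw [Module.End.mem_maxGenEigenspace] at hv ⊢
  obtain ⟨m, hm⟩ := hv
  refine ⟨m, ?_⟩
  have := congrArg (fun (f : Module.End ℂ V) => f v) (aux_conj_pow B X c μ h m)
  simpa [Module.End.mul_apply, hm] using this

lemma aux_exists_eig {V : Type} [AddCommGroup V] [Module ℂ V] [FiniteDimensional ℂ V]
    (B : Module.End ℂ V) (W : Submodule ℂ V) (hW : W ≠ ⊥) (hB : ∀ v ∈ W, B v ∈ W) :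
    ∃ μ : ℂ, ∃ v ∈ W, v ≠ 0 ∧ B v = μ • v := by
  haveI : Nontrivial W := Submodule.nontrivial_iff_ne_bot.mpr hW
  obtain ⟨μ, hμ⟩ := Module.End.exists_eigenvalue (B.restrict hB)
  obtain ⟨v, hv⟩ := hμ.exists_hasEigenvector
  refine ⟨μ, v.1, v.2, by simpa using hv.2, ?_⟩
  have := congrArg Subtype.val hv.apply_eq_smul
  simpa [LinearMap.restrict_apply] using this

lemma aux_zpow_inj {q : ℂ} (hq : q ≠ 0) (hroot : ∀ m : ℕ, 0 < m → q ^ m ≠ 1)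
    {t s : ℤ} (h : q ^ t = q ^ s) : t = s := by
  by_contra hne
  have key : ∀ d : ℤ, 0 < d → q ^ d ≠ 1 := by
    intro d hd h1
    have : q ^ d.toNat = 1 := by rw [← zpow_natCast, Int.toNat_of_nonneg hd.le]; exact h1
    exact hroot d.toNat (by omega) this
  rcases lt_trichotomy t s with hlt | heq | hgt
  · have : q ^ (s - t) = 1 := by
      rw [zpow_sub₀ hq, h, div_self (zpow_ne_zero _ hq)]
    exact key _ (by omega) this
  · exact hne heq
  · have : q ^ (t - s) = 1 := by
      rw [zpow_sub₀ hq, h, div_self (zpow_ne_zero _ hq)]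
    exact key _ (by omega) this

lemma aux_sink {q : ℂ} (hq : q ≠ 0) (hroot : ∀ m : ℕ, 0 < m → q ^ m ≠ 1)
    (E : Set ℂ) (hE : E.Finite) (hne : E.Nonempty) (h0 : (0 : ℂ) ∉ E) :
    ∃ μ ∈ E, q * μ ∉ E ∧ q ^ 2 * μ ∉ E := by
  obtain ⟨ν, hν⟩ := hne
  have hν0 : ν ≠ 0 := fun h => h0 (h ▸ hν)
  have hFfin : ((fun t : ℤ => ν * q ^ t) ⁻¹' E).Finite := by
    refine Set.Finite.preimage ?_ hE
    intro a _ b _ hab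
    exact aux_zpow_inj hq hroot (mul_left_cancel₀ hν0 hab)
  have h0F : (0 : ℤ) ∈ (fun t : ℤ => ν * q ^ t) ⁻¹' E := by simpa using hν
  have h0Fs : (0 : ℤ) ∈ hFfin.toFinset := hFfin.mem_toFinset.mpr h0F
  obtain ⟨t0, ht0mem, hmax⟩ :
      ∃ t0 : ℤ, ν * q ^ t0 ∈ E ∧ ∀ t : ℤ, ν * q ^ t ∈ E → t ≤ t0 := by
    refine ⟨hFfin.toFinset.max' ⟨0, h0Fs⟩, ?_, ?_⟩
    · exact hFfin.mem_toFinset.mp (hFfin.toFinset.max'_mem ⟨0, h0Fs⟩)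
    · intro t ht
      exact hFfin.toFinset.le_max' t (hFfin.mem_toFinset.mpr ht)
  refine ⟨ν * q ^ t0, ht0mem, ?_, ?_⟩
  · intro hmem
    have heq : q * (ν * q ^ t0) = ν * q ^ (t0 + 1) := by
      rw [zpow_add₀ hq, zpow_one]; ring
    have := hmax _ (heq ▸ hmem)
    omega
  · intro hmem
    have heq : q ^ 2 * (ν * q ^ t0) = ν * q ^ (t0 + 2) := by
      rw [zpow_add₀ hq, zpow_two, pow_two]; ring
    have := hmax _ (heq ▸ hmem)
    omega


lemma aux_maxGen_zero_eq_bot {V : Type} [AddCommGroup V] [Module ℂ V]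
    (B C : Module.End ℂ V) (hC : C * B = 1) :
    B.maxGenEigenspace 0 = ⊥ := by
  have hinj : ∀ (m : ℕ) (v : V), (B ^ m) v = 0 → v = 0 := by
    intro m
    induction m with
    | zero => intro v hv; simpa using hv
    | succ m ih =>
      intro v hv
      have hBv : B v = 0 := by
        apply ih
        have : (B ^ (m + 1)) v = (B ^ m) (B v) := by
          rw [pow_succ, Module.End.mul_apply]
        rw [← this, hv]
      have := congrArg (fun (f : Module.End ℂ V) => f v) hC
      simpa [Module.End.mul_apply, hBv] using this.symm
  rw [Submodule.eq_bot_iff]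
  intro v hv
  rw [Module.End.mem_maxGenEigenspace] at hv
  obtain ⟨m, hm⟩ := hv
  simp only [zero_smul, sub_zero] at hm
  exact hinj m v hm

lemma aux_finite_E {V : Type} [AddCommGroup V] [Module ℂ V] [FiniteDimensional ℂ V]
    (B : Module.End ℂ V) : {μ : ℂ | B.maxGenEigenspace μ ≠ ⊥}.Finite := by
  apply Set.Finite.subset B.finite_hasEigenvalue
  intro μ hμ
  obtain ⟨v, hvmem, hv0⟩ := (Submodule.ne_bot_iff _).mp hμ
  rw [Module.End.mem_maxGenEigenspace] at hvmem
  obtain ⟨m, hm⟩ := hvmem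
  have hgen : Module.End.HasGenEigenvalue B μ m := by
    refine (Submodule.ne_bot_iff _).mpr ⟨v, ?_, hv0⟩
    exact Module.End.mem_genEigenspace_nat.mpr hm
  exact Module.End.hasEigenvalue_of_hasGenEigenvalue hgen

section Ops

variable (q : ℂ) (n : ℕ) (L : Type) [AddCommGroup L] [Module ℂ L]
  [Module (Usp q n) L] [IsScalarTower ℂ (Usp q n) L]

def Xop (k : Fin n) (j : Fin (2 * n)) : Module.End ℂ L :=
  Algebra.lsmul ℂ ℂ L (S q n (lo k) j)

def Aop (k : Fin n) : Module.End ℂ L := Xop q n L k (hi k)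

def Cop (k : Fin n) : Module.End ℂ L := Algebra.lsmul ℂ ℂ L (SInv q n k)

lemma Xop_apply (k : Fin n) (j : Fin (2 * n)) (v : L) :
    Xop q n L k j v = S q n (lo k) j • v := rfl

lemma Cop_Aop (k : Fin n) : Cop q n L k * Aop q n L k = 1 := by
  rw [Cop, Aop, Xop, ← map_mul, S_inv_left, map_one]

lemma op_comm (k m : Fin n) (hkm : k < m) (b : Fin (2 * n)) (hb : b.val ≤ 2 * k.val + 1) :
    Aop q n L m * Xop q n L k b = Xop q n L k b * Aop q n L m := by
  rw [Aop, Xop, Xop, ← map_mul, ← map_mul, comm_lt k m hkm b hb]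

lemma op_r1 (hq : q ≠ 0) (k : Fin n) (j0 : Fin (2 * n)) (hj : j0.val < 2 * k.val) :
    Aop q n L k * Xop q n L k j0 = q • (Xop q n L k j0 * Aop q n L k) := by
  rw [Aop, Xop, Xop, ← map_mul, ← map_mul, row_rel1 hq k j0 hj, map_smul]

lemma op_r2 (hq : q ≠ 0) (k : Fin n) :
    Aop q n L k * Xop q n L k (lo k) = (q ^ 2) • (Xop q n L k (lo k) * Aop q n L k) := by
  rw [Aop, Xop, Xop, ← map_mul, ← map_mul, row_rel2 hq k, map_smul]

lemma Aop_comm (k m : Fin n) : Aop q n L k * Aop q n L m = Aop q n L m * Aop q n L k := by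
  rcases lt_trichotomy k m with h | h | h
  · exact (op_comm q n L k m h (hi k) (by simp [hi])).symm
  · rw [h]
  · exact op_comm q n L m k h (hi m) (by simp [hi])

end Ops



/-- Every finite-dimensional irreducible representation of `U'_q(sp_{2n})`
(`q` nonzero, not a root of unity) is a highest weight representation: it
contains a nonzero vector `v` with `s_ij v = 0` for all paper-odd `i` and
`j ≤ i`, and `s_{i,i+1} v = λ_i v` for some nonzero scalars `λ_i`, and `v`
generates the representation. -/
theorem fd_simple_is_highest_weight (q : ℂ) (hq : q ≠ 0)
    (hroot : ∀ m : ℕ, 0 < m → q ^ m ≠ 1) (n : ℕ)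
    (L : Type) [AddCommGroup L] [Module ℂ L] [Module (Usp q n) L]
    [IsScalarTower ℂ (Usp q n) L]
    (hsimple : IsSimpleModule (Usp q n) L) (hfd : FiniteDimensional ℂ L) :
    ∃ v : L, v ≠ 0 ∧
      (∀ (k : Fin n) (j : Fin (2 * n)), j ≤ lo k → S q n (lo k) j • v = 0) ∧
      (∀ k : Fin n, ∃ lam : ℂ, lam ≠ 0 ∧ S q n (lo k) (hi k) • v = lam • v) ∧
      Submodule.span (Usp q n) {v} = ⊤ := by
  classical
  haveI : Nontrivial L := IsSimpleModule.nontrivial (Usp q n) L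
  -- Phase 1: descending construction of invariant subspaces
  set P1 : ℕ → Prop := fun r => ∃ W : Submodule ℂ L, W ≠ ⊥ ∧
      (∀ m : Fin n, ∀ v ∈ W, Aop q n L m v ∈ W) ∧
      (∀ k : Fin n, r ≤ k.val → ∀ j : Fin (2 * n), j.val ≤ 2 * k.val →
        ∀ v ∈ W, Xop q n L k j v = 0) ∧
      (∀ k : Fin n, k.val < r → ∀ j : Fin (2 * n), j.val ≤ 2 * k.val →
        ∀ v ∈ W, Xop q n L k j v ∈ W) with hP1def
  have base : P1 n := by
    refine ⟨⊤, ?_, fun _ _ _ => trivial, fun k hk => absurd k.isLt (by omega),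
      fun _ _ _ _ _ _ => trivial⟩
    intro h
    obtain ⟨x, hx⟩ := exists_ne (0 : L)
    rw [Submodule.eq_bot_iff] at h
    exact hx (h x trivial)
  have step : ∀ r : ℕ, r < n → P1 (r + 1) → P1 r := by
    rintro r hr ⟨W, hWne, hWA, hWzero, hWX⟩
    set k0 : Fin n := ⟨r, hr⟩ with hk0
    set B : Module.End ℂ L := Aop q n L k0 with hB
    set E : Set ℂ := {μ | B.maxGenEigenspace μ ⊓ W ≠ ⊥} with hE
    have hEfin : E.Finite := by
      apply (aux_finite_E B).subset
      intro μ hμ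
      simp only [hE, Set.mem_setOf_eq] at hμ ⊢
      intro hbot
      exact hμ (by rw [hbot, bot_inf_eq])
    have hEne : E.Nonempty := by
      obtain ⟨μ, v, hvW, hv0, hBv⟩ := aux_exists_eig B W hWne (hWA k0)
      refine ⟨μ, ?_⟩
      simp only [hE, Set.mem_setOf_eq]
      refine (Submodule.ne_bot_iff _).mpr ⟨v, Submodule.mem_inf.mpr ⟨?_, hvW⟩, hv0⟩
      rw [Module.End.mem_maxGenEigenspace]
      exact ⟨1, by simp [LinearMap.sub_apply, LinearMap.smul_apply, hBv]⟩
    have hE0 : (0 : ℂ) ∉ E := by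
      simp only [hE, Set.mem_setOf_eq, not_not]
      rw [aux_maxGen_zero_eq_bot B (Cop q n L k0) (Cop_Aop q n L k0), bot_inf_eq]
    obtain ⟨μ0, hμ0E, hq1, hq2⟩ := aux_sink hq hroot E hEfin hEne hE0
    refine ⟨B.maxGenEigenspace μ0 ⊓ W, hμ0E, ?_, ?_, ?_⟩
    · -- invariance under all Aop m
      intro m v hv
      obtain ⟨hv1, hv2⟩ := Submodule.mem_inf.mp hv
      refine Submodule.mem_inf.mpr ⟨?_, hWA m v hv2⟩
      exact Module.End.mapsTo_maxGenEigenspace_of_comm (Aop_comm q n L k0 m) μ0 hv1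
    · -- vanishing for rows ≥ r
      intro k hk j hj v hv
      obtain ⟨hv1, hv2⟩ := Submodule.mem_inf.mp hv
      rcases Nat.lt_or_ge r k.val with hlt | hge
      · exact hWzero k hlt j hj v hv2
      · have hkval : k.val = r := le_antisymm hge hk
        have hkk0 : k = k0 := Fin.ext (by simp [hk0, hkval])
        have hBk : B = Aop q n L k := by rw [hB, hkk0]
        have hvB : v ∈ (Aop q n L k).maxGenEigenspace μ0 := by rwa [hBk] at hv1
        have hvW' : Xop q n L k j v ∈ W := hWX k (by omega) j hj v hv2
        have hmax : ∃ c : ℂ, c * μ0 ∉ E ∧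
            Xop q n L k j v ∈ B.maxGenEigenspace (c * μ0) := by
          rcases Nat.lt_or_ge j.val (2 * k.val) with hjlt | hjge
          · refine ⟨q, hq1, ?_⟩
            rw [hBk]
            exact aux_mapsTo_maxGen _ (Xop q n L k j) q μ0
              (op_r1 q n L hq k j hjlt) hvB
          · have hj' : j = lo k := Fin.ext (by simp only [lo]; omega)
            subst hj'
            refine ⟨q ^ 2, hq2, ?_⟩
            rw [hBk]
            exact aux_mapsTo_maxGen _ (Xop q n L k (lo k)) (q ^ 2) μ0
              (op_r2 q n L hq k) hvB
        obtain ⟨c, hcE, hcmem⟩ := hmax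
        have hbot : B.maxGenEigenspace (c * μ0) ⊓ W = ⊥ := by
          by_contra hne
          exact hcE hne
        have : Xop q n L k j v ∈ B.maxGenEigenspace (c * μ0) ⊓ W :=
          Submodule.mem_inf.mpr ⟨hcmem, hvW'⟩
        rw [hbot] at this
        simpa using this
    · -- invariance for rows < r
      intro k hk j hj v hv
      obtain ⟨hv1, hv2⟩ := Submodule.mem_inf.mp hv
      refine Submodule.mem_inf.mpr ⟨?_, hWX k (by omega) j hj v hv2⟩
      have hcomm : B * Xop q n L k j = Xop q n L k j * B :=
        op_comm q n L k k0 (by simpa [Fin.lt_def, hk0] using hk) j (by omega)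
      exact Module.End.mapsTo_maxGenEigenspace_of_comm hcomm μ0 hv1
  have hP1all : ∀ t : ℕ, t ≤ n → P1 (n - t) := by
    intro t
    induction t with
    | zero => intro _; simpa using base
    | succ t ih =>
      intro ht
      have h1 := ih (by omega)
      by_cases hnt : n - t = 0
      · rw [show n - (t + 1) = 0 by omega]
        rw [hnt] at h1; exact h1
      · exact step (n - (t + 1)) (by omega) (by rw [show n - (t+1) + 1 = n - t by omega]; exact h1)
  have hP10 : P1 0 := by simpa [Nat.sub_self] using hP1all n le_rfl
  -- Phase 2: ascending construction of common eigenvector subspace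
  obtain ⟨W0, hW0ne, hW0A, hW0zero, -⟩ := hP10
  set P2 : ℕ → Prop := fun t => ∃ W : Submodule ℂ L, W ≠ ⊥ ∧ W ≤ W0 ∧
      (∀ m : Fin n, ∀ v ∈ W, Aop q n L m v ∈ W) ∧
      (∀ m : Fin n, m.val < t → ∃ lam : ℂ, ∀ v ∈ W, Aop q n L m v = lam • v) with hP2def
  have base2 : P2 0 := ⟨W0, hW0ne, le_rfl, hW0A, fun m hm => absurd hm (by omega)⟩
  have step2 : ∀ t : ℕ, t < n → P2 t → P2 (t + 1) := by
    rintro t ht ⟨W, hWne, hWle, hWA, hWlam⟩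
    set m0 : Fin n := ⟨t, ht⟩ with hm0
    obtain ⟨μ, v, hvW, hv0, hBv⟩ := aux_exists_eig (Aop q n L m0) W hWne (hWA m0)
    refine ⟨Module.End.eigenspace (Aop q n L m0) μ ⊓ W, ?_, le_trans inf_le_right hWle,
      ?_, ?_⟩
    · refine (Submodule.ne_bot_iff _).mpr ⟨v, Submodule.mem_inf.mpr ⟨?_, hvW⟩, hv0⟩
      rw [Module.End.mem_eigenspace_iff]; exact hBv
    · intro m w hw
      obtain ⟨hw1, hw2⟩ := Submodule.mem_inf.mp hw
      refine Submodule.mem_inf.mpr ⟨?_, hWA m w hw2⟩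
      rw [Module.End.mem_eigenspace_iff] at hw1 ⊢
      have hAc := Aop_comm q n L m0 m
      calc Aop q n L m0 (Aop q n L m w) = (Aop q n L m0 * Aop q n L m) w := rfl
        _ = (Aop q n L m * Aop q n L m0) w := by rw [hAc]
        _ = Aop q n L m (Aop q n L m0 w) := rfl
        _ = μ • Aop q n L m w := by rw [hw1, map_smul]
    · intro m hm
      rcases Nat.lt_or_ge m.val t with hlt | hge
      · obtain ⟨lam, hlam⟩ := hWlam m hlt
        exact ⟨lam, fun w hw => hlam w (Submodule.mem_inf.mp hw).2⟩
      · have hmm : m = m0 := Fin.ext (by simp [hm0]; omega)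
        subst hmm
        refine ⟨μ, fun w hw => ?_⟩
        have := (Submodule.mem_inf.mp hw).1
        rwa [Module.End.mem_eigenspace_iff] at this
  have hP2all : ∀ t : ℕ, t ≤ n → P2 t := by
    intro t
    induction t with
    | zero => intro _; exact base2
    | succ t ih => intro ht; exact step2 t (by omega) (ih (by omega))
  obtain ⟨W, hWne, hWle, hWA, hWlam⟩ := hP2all n le_rfl
  obtain ⟨v, hvW, hv0⟩ := (Submodule.ne_bot_iff _).mp hWne
  refine ⟨v, hv0, ?_, ?_, ?_⟩
  · intro k j hj
    have : Xop q n L k j v = 0 := hW0zero k (by omega) j (by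
      have := hj
      rw [Fin.le_def] at this
      simpa [lo] using this) v (hWle hvW)
    rwa [Xop_apply] at this
  · intro k
    obtain ⟨lam, hlam⟩ := hWlam k k.isLt
    have hAv : Aop q n L k v = lam • v := hlam v hvW
    refine ⟨lam, ?_, ?_⟩
    · intro h0
      rw [h0, zero_smul] at hAv
      have hCA := congrArg (fun (f : Module.End ℂ L) => f v) (Cop_Aop q n L k)
      simp only [Module.End.mul_apply, Module.End.one_apply, hAv, map_zero] at hCA
      exact hv0 hCA.symm
    · rw [← Xop_apply q n L k (hi k) v]
      exact hAv
  · haveI := hsimple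
    rcases eq_bot_or_eq_top (Submodule.span (Usp q n) {v}) with h | h
    · exfalso
      have : v ∈ Submodule.span (Usp q n) {v} := Submodule.mem_span_singleton_self v
      rw [h] at this
      exact hv0 (by simpa using this)
    · exact h

end
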